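/- Let K(z) = ∫₀^{π/2} dφ/√(1 - z² sin²φ) for z ∈ (0,1), and let f(z) = (2/π)·z·K(z). Then 1 < f'(z) < 1/(1-z) for all z ∈ (0,1); in particular f is a Seiffert function whose derivative satisfies the harmonic-representation criterion. -/

import Mathlib

noncomputable def Kell (z : ℝ) : ℝ :=
  ∫ φ in (0:ℝ)..(Real.pi / 2), 1 / Real.sqrt (1 - z ^ 2 * Real.sin φ ^ 2)



open Real MeasureTheory intervalIntegral

lemma hasDerivAt_integrand {x s : ℝ} (hx : x ^ 2 * s ^ 2 < 1) :
    HasDerivAt (fun y : ℝ => y / Real.sqrt (1 - y ^ 2 * s ^ 2))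
      (((1 - x ^ 2 * s ^ 2) * Real.sqrt (1 - x ^ 2 * s ^ 2))⁻¹) x := by
  have hu : (0:ℝ) < 1 - x ^ 2 * s ^ 2 := by linarith
  have hsq : Real.sqrt (1 - x ^ 2 * s ^ 2) ^ 2 = 1 - x ^ 2 * s ^ 2 := Real.sq_sqrt hu.le
  have hsqpos : 0 < Real.sqrt (1 - x ^ 2 * s ^ 2) := Real.sqrt_pos.mpr hu
  have h1 : HasDerivAt (fun y : ℝ => 1 - y ^ 2 * s ^ 2) (-(2 * x * s ^ 2)) x := by
    simpa using ((hasDerivAt_pow 2 x).mul_const (s ^ 2)).const_sub 1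
  have h2 : HasDerivAt (fun y : ℝ => Real.sqrt (1 - y ^ 2 * s ^ 2))
      (1 / (2 * Real.sqrt (1 - x ^ 2 * s ^ 2)) * (-(2 * x * s ^ 2))) x :=
    (Real.hasDerivAt_sqrt hu.ne').comp x h1
  have h3 := (hasDerivAt_id x).div h2 hsqpos.ne'
  refine h3.congr_deriv ?_
  symm
  rw [hsq]
  field_simp
  have hid : id x = x := rfl
  linear_combination (-1) * hsq + (-(x * s ^ 2)) * hid

lemma upos {x : ℝ} (hx : x ^ 2 < 1) (φ : ℝ) : 0 < 1 - x ^ 2 * Real.sin φ ^ 2 := by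
  nlinarith [Real.sin_sq_le_one φ, sq_nonneg x]

lemma contG {x : ℝ} (hx : x ^ 2 < 1) :
    Continuous fun φ : ℝ => ((1 - x ^ 2 * Real.sin φ ^ 2) * Real.sqrt (1 - x ^ 2 * Real.sin φ ^ 2))⁻¹ := by
  have hc : Continuous fun φ : ℝ => 1 - x ^ 2 * Real.sin φ ^ 2 := by continuity
  refine (hc.mul hc.sqrt).inv₀ fun φ => ?_
  have := upos hx φ
  exact (mul_pos this (Real.sqrt_pos.mpr this)).ne'

set_option maxHeartbeats 1000000 in
lemma main_deriv {z : ℝ} (hz : z ∈ Set.Ioo (0:ℝ) 1) :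
    HasDerivAt (fun x => x * Kell x)
      (∫ φ in (0:ℝ)..(Real.pi / 2),
        ((1 - z ^ 2 * Real.sin φ ^ 2) * Real.sqrt (1 - z ^ 2 * Real.sin φ ^ 2))⁻¹) z := by
  obtain ⟨hz0, hz1⟩ := hz
  set r : ℝ := (1 + z) / 2 with hr
  have hr1 : r < 1 := by rw [hr]; linarith
  have hrpos : 0 < r := by rw [hr]; linarith
  have hzr : z < r := by rw [hr]; linarith
  set ε : ℝ := (1 - z) / 2 with he
  have hε : 0 < ε := by rw [he]; linarith
  have hball : ∀ x ∈ Metric.ball z ε, x ^ 2 < 1 ∧ x ^ 2 ≤ r ^ 2 := by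
    intro x hx
    rw [Metric.mem_ball, Real.dist_eq] at hx
    have h1 : |x| < r := by
      have h2 : |x| ≤ |x - z| + |z| := by simpa using abs_add_le (x - z) z
      rw [abs_of_pos hz0] at h2
      rw [hr]; rw [he] at hx; linarith
    constructor <;> nlinarith [sq_abs x, abs_nonneg x]
  have hr2 : (0:ℝ) < 1 - r ^ 2 := by nlinarith
  have hz2 : z ^ 2 < 1 := by nlinarith
  have hmeas : ∀ᶠ x in nhds z,
      AEStronglyMeasurable (fun φ => x / Real.sqrt (1 - x ^ 2 * Real.sin φ ^ 2))
        (MeasureTheory.volume.restrict (Set.uIoc (0:ℝ) (Real.pi / 2))) := by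
    filter_upwards [Metric.ball_mem_nhds z hε] with x hx
    have hx2 := (hball x hx).1
    have hc : Continuous fun φ : ℝ => x / Real.sqrt (1 - x ^ 2 * Real.sin φ ^ 2) := by
      refine continuous_const.div (by continuity) fun φ => ?_
      exact (Real.sqrt_pos.mpr (upos hx2 φ)).ne'
    exact hc.aestronglyMeasurable
  have hint : IntervalIntegrable (fun φ => z / Real.sqrt (1 - z ^ 2 * Real.sin φ ^ 2))
      MeasureTheory.volume 0 (Real.pi / 2) := by
    have hc : Continuous fun φ : ℝ => z / Real.sqrt (1 - z ^ 2 * Real.sin φ ^ 2) := by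
      refine continuous_const.div (by continuity) fun φ => ?_
      exact (Real.sqrt_pos.mpr (upos hz2 φ)).ne'
    exact hc.intervalIntegrable _ _
  have hmeas' : AEStronglyMeasurable
      (fun φ => ((1 - z ^ 2 * Real.sin φ ^ 2) * Real.sqrt (1 - z ^ 2 * Real.sin φ ^ 2))⁻¹)
      (MeasureTheory.volume.restrict (Set.uIoc (0:ℝ) (Real.pi / 2))) :=
    (contG hz2).aestronglyMeasurable
  have hbound : ∀ᵐ φ ∂(MeasureTheory.volume : MeasureTheory.Measure ℝ),
      φ ∈ Set.uIoc (0:ℝ) (Real.pi / 2) → ∀ x ∈ Metric.ball z ε,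
      ‖((1 - x ^ 2 * Real.sin φ ^ 2) * Real.sqrt (1 - x ^ 2 * Real.sin φ ^ 2))⁻¹‖
        ≤ ((1 - r ^ 2) * Real.sqrt (1 - r ^ 2))⁻¹ := by
    refine Filter.Eventually.of_forall fun φ _ x hx => ?_
    have hx2 := (hball x hx).1
    have hxr := (hball x hx).2
    have hu := upos hx2 φ
    have hle : 1 - r ^ 2 ≤ 1 - x ^ 2 * Real.sin φ ^ 2 := by
      nlinarith [Real.sin_sq_le_one φ, sq_nonneg (x * Real.sin φ)]
    have h1 : (1 - r ^ 2) * Real.sqrt (1 - r ^ 2)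
        ≤ (1 - x ^ 2 * Real.sin φ ^ 2) * Real.sqrt (1 - x ^ 2 * Real.sin φ ^ 2) :=
      mul_le_mul hle (Real.sqrt_le_sqrt hle) (Real.sqrt_nonneg _) hu.le
    rw [Real.norm_eq_abs, abs_of_nonneg (by positivity)]
    exact inv_anti₀ (by positivity) h1
  have hbint : IntervalIntegrable (fun _ : ℝ => ((1 - r ^ 2) * Real.sqrt (1 - r ^ 2))⁻¹)
      MeasureTheory.volume 0 (Real.pi / 2) := intervalIntegrable_const
  have hdiff : ∀ᵐ φ ∂(MeasureTheory.volume : MeasureTheory.Measure ℝ),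
      φ ∈ Set.uIoc (0:ℝ) (Real.pi / 2) → ∀ x ∈ Metric.ball z ε,
      HasDerivAt (fun y => y / Real.sqrt (1 - y ^ 2 * Real.sin φ ^ 2))
        (((1 - x ^ 2 * Real.sin φ ^ 2) * Real.sqrt (1 - x ^ 2 * Real.sin φ ^ 2))⁻¹) x := by
    refine Filter.Eventually.of_forall fun φ _ x hx => ?_
    have hx2 := (hball x hx).1
    exact hasDerivAt_integrand (by nlinarith [Real.sin_sq_le_one φ, sq_nonneg (x * Real.sin φ)])
  have key := intervalIntegral.hasDerivAt_integral_of_dominated_loc_of_deriv_le (Metric.ball_mem_nhds z hε)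
    hmeas hint hmeas' hbound hbint hdiff
  have heq : (fun x => ∫ φ in (0:ℝ)..(Real.pi / 2), x / Real.sqrt (1 - x ^ 2 * Real.sin φ ^ 2))
      = fun x => x * Kell x := by
    funext x
    rw [Kell, ← intervalIntegral.integral_const_mul]
    simp only [mul_one_div]
  rw [heq] at key
  exact key.2

lemma hasDerivAt_H {z : ℝ} (hz2 : z ^ 2 < 1) (φ : ℝ) :
    HasDerivAt (fun t => -(z ^ 2 / (1 - z ^ 2)) *
        (Real.sin t * Real.cos t / Real.sqrt (1 - z ^ 2 * Real.sin t ^ 2)))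
      (((1 - z ^ 2 * Real.sin φ ^ 2) * Real.sqrt (1 - z ^ 2 * Real.sin φ ^ 2))⁻¹
        - (1 - z ^ 2)⁻¹ * Real.sqrt (1 - z ^ 2 * Real.sin φ ^ 2)) φ := by
  have hu := upos hz2 φ
  have hsq : Real.sqrt (1 - z ^ 2 * Real.sin φ ^ 2) ^ 2 = 1 - z ^ 2 * Real.sin φ ^ 2 :=
    Real.sq_sqrt hu.le
  have hsqpos : 0 < Real.sqrt (1 - z ^ 2 * Real.sin φ ^ 2) := Real.sqrt_pos.mpr hu
  have hu' : HasDerivAt (fun t => 1 - z ^ 2 * Real.sin t ^ 2)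
      (-(z ^ 2 * (2 * Real.sin φ * Real.cos φ))) φ := by
    simpa [mul_assoc, mul_comm, mul_left_comm] using
      (((Real.hasDerivAt_sin φ).pow 2).const_mul (z ^ 2)).const_sub 1
  have hsqrt : HasDerivAt (fun t => Real.sqrt (1 - z ^ 2 * Real.sin t ^ 2))
      (1 / (2 * Real.sqrt (1 - z ^ 2 * Real.sin φ ^ 2)) *
        (-(z ^ 2 * (2 * Real.sin φ * Real.cos φ)))) φ :=
    (Real.hasDerivAt_sqrt hu.ne').comp φ hu'
  have hnum : HasDerivAt (fun t => Real.sin t * Real.cos t)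
      (Real.cos φ * Real.cos φ + Real.sin φ * (-Real.sin φ)) φ :=
    (Real.hasDerivAt_sin φ).mul (Real.hasDerivAt_cos φ)
  have hH := (hnum.div hsqrt hsqpos.ne').const_mul (-(z ^ 2 / (1 - z ^ 2)))
  refine hH.congr_deriv ?_
  symm
  have hpyth := Real.sin_sq_add_cos_sq φ
  have h1k : (1:ℝ) - z ^ 2 ≠ 0 := by nlinarith
  field_simp
  linear_combination
    (-Real.sqrt (1 - z ^ 2 * Real.sin φ ^ 2) ^ 2
      + z ^ 2 * Real.sin φ ^ 2 * Real.sqrt (1 - z ^ 2 * Real.sin φ ^ 2) ^ 2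
      - z ^ 4 * Real.sin φ ^ 2 + z ^ 4 * Real.sin φ ^ 4) * hsq +
    (z ^ 2 * Real.sqrt (1 - z ^ 2 * Real.sin φ ^ 2) ^ 2 + z ^ 4 * Real.sin φ ^ 2
      - z ^ 4 * Real.sin φ ^ 2 * Real.sqrt (1 - z ^ 2 * Real.sin φ ^ 2) ^ 2
      - z ^ 6 * Real.sin φ ^ 4) * hpyth

lemma parts {z : ℝ} (hz2 : z ^ 2 < 1) :
    ∫ φ in (0:ℝ)..(Real.pi / 2),
        ((1 - z ^ 2 * Real.sin φ ^ 2) * Real.sqrt (1 - z ^ 2 * Real.sin φ ^ 2))⁻¹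
      = (1 - z ^ 2)⁻¹ * ∫ φ in (0:ℝ)..(Real.pi / 2), Real.sqrt (1 - z ^ 2 * Real.sin φ ^ 2) := by
  have hcsqrt : Continuous fun φ : ℝ => Real.sqrt (1 - z ^ 2 * Real.sin φ ^ 2) := by
    have : Continuous fun φ : ℝ => 1 - z ^ 2 * Real.sin φ ^ 2 := by continuity
    exact this.sqrt
  have hgc : Continuous fun φ : ℝ =>
      ((1 - z ^ 2 * Real.sin φ ^ 2) * Real.sqrt (1 - z ^ 2 * Real.sin φ ^ 2))⁻¹
        - (1 - z ^ 2)⁻¹ * Real.sqrt (1 - z ^ 2 * Real.sin φ ^ 2) :=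
    (contG hz2).sub (continuous_const.mul hcsqrt)
  have hFTC := intervalIntegral.integral_eq_sub_of_hasDerivAt
    (f := fun t => -(z ^ 2 / (1 - z ^ 2)) *
        (Real.sin t * Real.cos t / Real.sqrt (1 - z ^ 2 * Real.sin t ^ 2)))
    (f' := fun φ => ((1 - z ^ 2 * Real.sin φ ^ 2) * Real.sqrt (1 - z ^ 2 * Real.sin φ ^ 2))⁻¹
        - (1 - z ^ 2)⁻¹ * Real.sqrt (1 - z ^ 2 * Real.sin φ ^ 2))
    (a := 0) (b := Real.pi / 2)
    (fun φ _ => hasDerivAt_H hz2 φ) (hgc.intervalIntegrable _ _)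
  rw [intervalIntegral.integral_sub ((contG hz2).intervalIntegrable _ _)
    ((hcsqrt.intervalIntegrable _ _).const_mul _),
    intervalIntegral.integral_const_mul] at hFTC
  simp only [Real.cos_pi_div_two, Real.sin_zero, mul_zero, zero_mul, zero_div, sub_zero, sub_self] at hFTC
  linarith

lemma lowerG {z : ℝ} (hz : z ∈ Set.Ioo (0:ℝ) 1) :
    Real.pi / 2 < ∫ φ in (0:ℝ)..(Real.pi / 2),
      ((1 - z ^ 2 * Real.sin φ ^ 2) * Real.sqrt (1 - z ^ 2 * Real.sin φ ^ 2))⁻¹ := by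
  obtain ⟨hz0, hz1⟩ := hz
  have hz2 : z ^ 2 < 1 := by nlinarith
  have hpos : 0 < ∫ φ in (0:ℝ)..(Real.pi / 2),
      (((1 - z ^ 2 * Real.sin φ ^ 2) * Real.sqrt (1 - z ^ 2 * Real.sin φ ^ 2))⁻¹ - 1) := by
    refine intervalIntegral.intervalIntegral_pos_of_pos_on
      (((contG hz2).sub continuous_const).intervalIntegrable _ _) ?_ (by positivity)
    intro φ hφ
    have hu := upos hz2 φ
    have hsin : 0 < Real.sin φ :=
      Real.sin_pos_of_pos_of_lt_pi hφ.1 (lt_trans hφ.2 (by linarith [Real.pi_pos]))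
    have hzs : 0 < z ^ 2 * Real.sin φ ^ 2 := by positivity
    have hul : 1 - z ^ 2 * Real.sin φ ^ 2 < 1 := by linarith
    have hsqrt1 : Real.sqrt (1 - z ^ 2 * Real.sin φ ^ 2) ≤ 1 :=
      le_trans (Real.sqrt_le_sqrt (by linarith)) (le_of_eq Real.sqrt_one)
    have hsqrtpos : 0 < Real.sqrt (1 - z ^ 2 * Real.sin φ ^ 2) := Real.sqrt_pos.mpr hu
    have hprod : (1 - z ^ 2 * Real.sin φ ^ 2) * Real.sqrt (1 - z ^ 2 * Real.sin φ ^ 2) < 1 := by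
      nlinarith
    have : 1 < ((1 - z ^ 2 * Real.sin φ ^ 2) * Real.sqrt (1 - z ^ 2 * Real.sin φ ^ 2))⁻¹ :=
      (one_lt_inv₀ (by positivity)).2 hprod
    linarith
  rw [intervalIntegral.integral_sub ((contG hz2).intervalIntegrable _ _)
    intervalIntegrable_const, intervalIntegral.integral_const] at hpos
  simp only [smul_eq_mul, mul_one, sub_zero] at hpos
  linarith

lemma upperE {z : ℝ} (hz2 : z ^ 2 < 1) :
    ∫ φ in (0:ℝ)..(Real.pi / 2), Real.sqrt (1 - z ^ 2 * Real.sin φ ^ 2) ≤ Real.pi / 2 := by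
  have hcsqrt : Continuous fun φ : ℝ => Real.sqrt (1 - z ^ 2 * Real.sin φ ^ 2) := by
    have : Continuous fun φ : ℝ => 1 - z ^ 2 * Real.sin φ ^ 2 := by continuity
    exact this.sqrt
  have h := intervalIntegral.integral_mono_on (μ := volume) (a := (0:ℝ)) (b := Real.pi / 2)
    (f := fun φ => Real.sqrt (1 - z ^ 2 * Real.sin φ ^ 2)) (g := fun _ => (1:ℝ))
    (by positivity) (hcsqrt.intervalIntegrable _ _) intervalIntegrable_const ?_
  · simpa using h
  · intro φ _
    exact le_trans (Real.sqrt_le_sqrt (by nlinarith [Real.sin_sq_le_one φ, sq_nonneg z]))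
      (le_of_eq Real.sqrt_one)

theorem stmt_11 :
    ∀ z ∈ Set.Ioo (0:ℝ) 1,
      1 < deriv (fun z => (2 / Real.pi) * z * Kell z) z ∧
      deriv (fun z => (2 / Real.pi) * z * Kell z) z < 1 / (1 - z) := by
  intro z hz
  obtain ⟨hz0, hz1⟩ := id hz
  have hz2 : z ^ 2 < 1 := by nlinarith
  have hπ := Real.pi_pos
  have hd := main_deriv hz
  have hd2 : HasDerivAt (fun x => (2 / Real.pi) * x * Kell x)
      ((2 / Real.pi) * ∫ φ in (0:ℝ)..(Real.pi / 2),
        ((1 - z ^ 2 * Real.sin φ ^ 2) * Real.sqrt (1 - z ^ 2 * Real.sin φ ^ 2))⁻¹) z := by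
    have := hd.const_mul (2 / Real.pi)
    simpa [mul_assoc] using this
  rw [hd2.deriv]
  constructor
  · have hG := lowerG hz
    have h1 := mul_lt_mul_of_pos_left hG (show (0:ℝ) < 2 / Real.pi by positivity)
    have h2 : 2 / Real.pi * (Real.pi / 2) = 1 := by field_simp
    linarith
  · rw [parts hz2]
    have hE := upperE hz2
    have h1z : (0:ℝ) < 1 - z ^ 2 := by linarith
    have h1 : 2 / Real.pi * ((1 - z ^ 2)⁻¹ *
        ∫ φ in (0:ℝ)..(Real.pi / 2), Real.sqrt (1 - z ^ 2 * Real.sin φ ^ 2)) ≤ (1 - z ^ 2)⁻¹ := by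
      calc 2 / Real.pi * ((1 - z ^ 2)⁻¹ *
          ∫ φ in (0:ℝ)..(Real.pi / 2), Real.sqrt (1 - z ^ 2 * Real.sin φ ^ 2))
          = (1 - z ^ 2)⁻¹ * (2 / Real.pi *
            ∫ φ in (0:ℝ)..(Real.pi / 2), Real.sqrt (1 - z ^ 2 * Real.sin φ ^ 2)) := by ring
        _ ≤ (1 - z ^ 2)⁻¹ * (2 / Real.pi * (Real.pi / 2)) := by
            apply mul_le_mul_of_nonneg_left _ (by positivity)
            exact mul_le_mul_of_nonneg_left hE (by positivity)
        _ = (1 - z ^ 2)⁻¹ := by field_simp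
    have h2 : (1 - z ^ 2)⁻¹ < 1 / (1 - z) := by
      rw [one_div]
      have hlt : 1 - z < 1 - z ^ 2 := by nlinarith
      exact inv_strictAnti₀ (by linarith) hlt
    linarith
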